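/- Let T be a tree on n ≥ 2 vertices, let e_1, e_2, …, e_{n−1} be a listing of its n−1 edges in any order, and for each i let t_i denote the transposition of the two endpoints of e_i. Then the product t_1 t_2 ⋯ t_{n−1} is an n-cycle, i.e. a cyclic permutation whose support is all of V(T). -/

import Mathlib

open scoped Classical

open Equiv Equiv.Perm SimpleGraph

section PermLemmas

variable {V : Type*} [Fintype V] [DecidableEq V]

private lemma swapmul_sameCycle_vu {σ : Perm V} {u v : V}
    (h : ¬ σ.SameCycle u v) :
    (Equiv.swap u v * σ).SameCycle v u := by
  set f := Equiv.swap u v * σ with hf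
  have happ : ∀ z : V, f z = Equiv.swap u v (σ z) := fun z => rfl
  have claim : ∀ j : ℕ, f.SameCycle v u ∨ (f ^ j) v = (σ ^ j) v := by
    intro j
    induction j with
    | zero => exact Or.inr rfl
    | succ j ih =>
      rcases ih with h1 | h1
      · exact Or.inl h1
      by_cases hzu : σ ((σ ^ j) v) = u
      · refine absurd (Equiv.Perm.SameCycle.symm ?_) h
        refine Equiv.Perm.SameCycle.trans ⟨(j : ℤ), by rw [zpow_natCast]⟩ ?_
        exact ⟨1, by rwa [zpow_one]⟩
      by_cases hzv : σ ((σ ^ j) v) = v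
      · refine Or.inl (Equiv.Perm.SameCycle.trans ⟨(j : ℤ), by rw [zpow_natCast, h1]⟩ ?_)
        exact ⟨1, by rw [zpow_one, happ, hzv, Equiv.swap_apply_right]⟩
      · refine Or.inr ?_
        rw [pow_succ', pow_succ', Equiv.Perm.mul_apply, Equiv.Perm.mul_apply, h1,
          Equiv.swap_apply_of_ne_of_ne hzu hzv, Equiv.Perm.mul_apply]
  have hm : 1 ≤ orderOf σ := orderOf_pos σ
  rcases claim (orderOf σ - 1) with h1 | h1
  · exact h1
  · have hclose : σ ((σ ^ (orderOf σ - 1)) v) = v := by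
      have h2 : (σ ^ orderOf σ) v = v := by rw [pow_orderOf_eq_one]; simp
      calc σ ((σ ^ (orderOf σ - 1)) v) = (σ ^ (orderOf σ - 1 + 1)) v := by
            rw [pow_succ', Equiv.Perm.mul_apply]
        _ = v := by rw [Nat.sub_add_cancel hm, h2]
    refine Equiv.Perm.SameCycle.trans ⟨((orderOf σ - 1 : ℕ) : ℤ), by rw [zpow_natCast, h1]⟩ ?_
    exact ⟨1, by rw [zpow_one, happ, hclose, Equiv.swap_apply_right]⟩

private lemma swapmul_sameCycle_step {σ : Perm V} {u v : V}
    (h : ¬ σ.SameCycle u v) (z : V) :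
    (Equiv.swap u v * σ).SameCycle z (σ z) := by
  set f := Equiv.swap u v * σ with hf
  have hvu : f.SameCycle v u := swapmul_sameCycle_vu h
  have h1 : f.SameCycle z (f z) := ⟨1, by rw [zpow_one]⟩
  by_cases hzu : σ z = u
  · have : f z = v := by rw [hf, Equiv.Perm.mul_apply, hzu, Equiv.swap_apply_left]
    rw [this] at h1
    rw [hzu]
    exact h1.trans hvu
  · by_cases hzv : σ z = v
    · have : f z = u := by rw [hf, Equiv.Perm.mul_apply, hzv, Equiv.swap_apply_right]
      rw [this] at h1
      rw [hzv]
      exact h1.trans hvu.symm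
    · have : f z = σ z := by
        rw [hf, Equiv.Perm.mul_apply, Equiv.swap_apply_of_ne_of_ne hzu hzv]
      rw [this] at h1
      exact h1

private lemma swapmul_of_sameCycle {σ : Perm V} {u v : V}
    (h : ¬ σ.SameCycle u v) {a b : V} (hab : σ.SameCycle a b) :
    (Equiv.swap u v * σ).SameCycle a b := by
  obtain ⟨i, _, _, hi⟩ := hab.exists_pow_eq''
  clear * - h hi
  induction i generalizing b with
  | zero => exact hi ▸ Equiv.Perm.SameCycle.refl _ _
  | succ i ih =>
    have := ih (b := (σ ^ i) a) rfl
    have h2 := swapmul_sameCycle_step h ((σ ^ i) a)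
    rw [← Equiv.Perm.mul_apply, ← pow_succ', hi] at h2
    exact this.trans h2

/-- Merging two cycles with a transposition: characterization of `SameCycle`. -/
private lemma sameCycle_swapMul_iff {σ : Perm V} {u v : V}
    (h : ¬ σ.SameCycle u v) (x y : V) :
    (Equiv.swap u v * σ).SameCycle x y ↔
      σ.SameCycle x y ∨ (σ.SameCycle x u ∧ σ.SameCycle v y) ∨
        (σ.SameCycle x v ∧ σ.SameCycle u y) := by
  set f := Equiv.swap u v * σ with hf
  constructor
  · intro hxy
    obtain ⟨i, _, _, hi⟩ := hxy.exists_pow_eq''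
    clear * - h hi hf
    induction i generalizing y with
    | zero => exact Or.inl (hi ▸ Equiv.Perm.SameCycle.refl _ _)
    | succ i ih =>
      set z := (f ^ i) x with hz
      have hrec := ih (y := z) rfl
      have hfz : f z = y := by
        rw [hz, ← Equiv.Perm.mul_apply, ← pow_succ', hi]
      have hstep : y = Equiv.swap u v (σ z) := by rw [← hfz]; rfl
      have hszc : σ.SameCycle z (σ z) := ⟨1, by rw [zpow_one]⟩
      by_cases hzu : σ z = u
      · have hy : y = v := by rw [hstep, hzu, Equiv.swap_apply_left]
        subst hy
        rcases hrec with h1 | ⟨h1, h2⟩ | ⟨h1, h2⟩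
        · exact Or.inr (Or.inl ⟨h1.trans (hzu ▸ hszc), Equiv.Perm.SameCycle.refl _ _⟩)
        · exact absurd ((h2.trans (hzu ▸ hszc)).symm) h
        · exact Or.inl h1
      · by_cases hzv : σ z = v
        · have hy : y = u := by rw [hstep, hzv, Equiv.swap_apply_right]
          subst hy
          rcases hrec with h1 | ⟨h1, h2⟩ | ⟨h1, h2⟩
          · exact Or.inr (Or.inr ⟨h1.trans (hzv ▸ hszc), Equiv.Perm.SameCycle.refl _ _⟩)
          · exact Or.inl h1
          · exact absurd (h2.trans (hzv ▸ hszc)) h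
        · have hy : y = σ z := by
            rw [hstep, Equiv.swap_apply_of_ne_of_ne hzu hzv]
          subst hy
          rcases hrec with h1 | ⟨h1, h2⟩ | ⟨h1, h2⟩
          · exact Or.inl (h1.trans hszc)
          · exact Or.inr (Or.inl ⟨h1, h2.trans hszc⟩)
          · exact Or.inr (Or.inr ⟨h1, h2.trans hszc⟩)
  · intro hxy
    have hvu : f.SameCycle v u := swapmul_sameCycle_vu h
    rcases hxy with h1 | ⟨h1, h2⟩ | ⟨h1, h2⟩
    · exact swapmul_of_sameCycle h h1
    · exact ((swapmul_of_sameCycle h h1).trans hvu.symm).trans (swapmul_of_sameCycle h h2)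
    · exact ((swapmul_of_sameCycle h h1).trans hvu).trans (swapmul_of_sameCycle h h2)

end PermLemmas

section GraphLemmas

variable {V : Type*}

/-- Reachability after adding one edge to a graph. -/
private lemma reachable_sup_edge_iff {A : SimpleGraph V} {u v : V} (huv : u ≠ v) (x y : V) :
    (A ⊔ SimpleGraph.fromEdgeSet {s(u, v)}).Reachable x y ↔
      A.Reachable x y ∨ (A.Reachable x u ∧ A.Reachable v y) ∨
        (A.Reachable x v ∧ A.Reachable u y) := by
  set B := A ⊔ SimpleGraph.fromEdgeSet {s(u, v)} with hB
  have hle : A ≤ B := le_sup_left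
  constructor
  · intro hxy
    rw [SimpleGraph.reachable_iff_reflTransGen] at hxy
    induction hxy with
    | refl => exact Or.inl (SimpleGraph.Reachable.refl x)
    | @tail b c _hab hbc ih =>
      have hbc' : A.Adj b c ∨ s(b, c) = s(u, v) := by
        rcases (SimpleGraph.sup_adj _ _ _ _).1 hbc with h1 | h1
        · exact Or.inl h1
        · rw [SimpleGraph.fromEdgeSet_adj] at h1
          exact Or.inr h1.1
      rcases hbc' with h1 | h1
      · have hbc2 : A.Reachable b c := h1.reachable
        rcases ih with h2 | ⟨h2, h3⟩ | ⟨h2, h3⟩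
        · exact Or.inl (h2.trans hbc2)
        · exact Or.inr (Or.inl ⟨h2, h3.trans hbc2⟩)
        · exact Or.inr (Or.inr ⟨h2, h3.trans hbc2⟩)
      · rw [Sym2.eq_iff] at h1
        rcases h1 with ⟨rfl, rfl⟩ | ⟨rfl, rfl⟩
        · -- b = u, c = v
          rcases ih with h2 | ⟨h2, h3⟩ | ⟨h2, h3⟩
          · exact Or.inr (Or.inl ⟨h2, SimpleGraph.Reachable.refl _⟩)
          · exact Or.inl (h2.trans h3.symm)
          · exact Or.inl h2
        · -- b = v, c = u
          rcases ih with h2 | ⟨h2, h3⟩ | ⟨h2, h3⟩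
          · exact Or.inr (Or.inr ⟨h2, SimpleGraph.Reachable.refl _⟩)
          · exact Or.inl h2
          · exact Or.inl (h2.trans h3.symm)
  · intro hxy
    have huvB : B.Reachable u v := by
      refine SimpleGraph.Adj.reachable ?_
      exact (SimpleGraph.sup_adj _ _ _ _).2 (Or.inr ((SimpleGraph.fromEdgeSet_adj _).2 ⟨rfl, huv⟩))
    rcases hxy with h1 | ⟨h1, h2⟩ | ⟨h1, h2⟩
    · exact h1.mono hle
    · exact ((h1.mono hle).trans huvB).trans (h2.mono hle)
    · exact ((h1.mono hle).trans huvB.symm).trans (h2.mono hle)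

end GraphLemmas

section Main

variable {V : Type*} [Fintype V] [DecidableEq V]

private lemma key_lemma : ∀ (l : List (V × V)),
    (l.map fun p => s(p.1, p.2)).Nodup → (∀ p ∈ l, p.1 ≠ p.2) →
    (SimpleGraph.fromEdgeSet {e | e ∈ l.map fun p => s(p.1, p.2)}).IsAcyclic →
    ∀ x y : V, ((l.map fun p => Equiv.swap p.1 p.2).prod.SameCycle x y ↔
      (SimpleGraph.fromEdgeSet {e | e ∈ l.map fun p => s(p.1, p.2)}).Reachable x y) := by
  intro l
  induction l with
  | nil =>
    intro _ _ _ x y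
    simp only [List.map_nil, List.prod_nil, Equiv.Perm.sameCycle_one, List.not_mem_nil,
      Set.setOf_false, SimpleGraph.fromEdgeSet_empty, SimpleGraph.reachable_bot]
  | cons p t ih =>
    intro hnodup hloop hacy x y
    obtain ⟨u, v⟩ := p
    have huv : u ≠ v := hloop (u, v) List.mem_cons_self
    -- set decomposition
    have hset : {e : Sym2 V | e ∈ ((u, v) :: t).map fun p => s(p.1, p.2)} =
        {e : Sym2 V | e ∈ t.map fun p => s(p.1, p.2)} ∪ {s(u, v)} := by
      ext e
      simp only [List.map_cons, List.mem_cons, Set.mem_setOf_eq, Set.mem_union,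
        Set.mem_singleton_iff]
      tauto
    set A := SimpleGraph.fromEdgeSet {e : Sym2 V | e ∈ t.map fun p => s(p.1, p.2)} with hA
    have hgraph : SimpleGraph.fromEdgeSet {e : Sym2 V | e ∈ ((u, v) :: t).map fun p => s(p.1, p.2)}
        = A ⊔ SimpleGraph.fromEdgeSet {s(u, v)} := by
      rw [hset, SimpleGraph.fromEdgeSet_union]
    rw [hgraph] at hacy ⊢
    have hle : A ≤ A ⊔ SimpleGraph.fromEdgeSet {s(u, v)} := le_sup_left
    -- edges of t nodup, loopless
    have hnodup' : (t.map fun p => s(p.1, p.2)).Nodup := by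
      simpa using hnodup.of_cons
    have hnotmem : s(u, v) ∉ t.map fun p => s(p.1, p.2) := by
      have := hnodup
      simp only [List.map_cons, List.nodup_cons] at this
      exact this.1
    have hloop' : ∀ p ∈ t, p.1 ≠ p.2 := fun p hp => hloop p (List.mem_cons_of_mem _ hp)
    -- acyclicity of A
    have hacyA : A.IsAcyclic := by
      intro w c hc
      exact hacy (c.mapLe hle) (hc.mapLe hle)
    -- A does not connect u and v
    have hAuv : ¬ A.Reachable u v := by
      have hadj : (A ⊔ SimpleGraph.fromEdgeSet {s(u, v)}).Adj u v :=
        (SimpleGraph.sup_adj _ _ _ _).2 (Or.inr ((SimpleGraph.fromEdgeSet_adj _).2 ⟨rfl, huv⟩))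
      have hbridge := (SimpleGraph.isAcyclic_iff_forall_adj_isBridge.mp hacy) hadj
      rw [SimpleGraph.isBridge_iff] at hbridge
      intro hreach
      apply hbridge
      refine hreach.mono ?_
      intro a b hab
      rw [SimpleGraph.deleteEdges, SimpleGraph.sdiff_adj]
      constructor
      · exact hle hab
      · intro hcontra
        rw [SimpleGraph.fromEdgeSet_adj] at hcontra
        obtain ⟨he, _⟩ := hcontra
        rw [Set.mem_singleton_iff] at he
        rw [hA, SimpleGraph.fromEdgeSet_adj] at hab
        rw [he] at hab
        exact hnotmem hab.1
    -- induction hypothesis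
    have IH := ih hnodup' hloop' hacyA
    have hsc : ¬ (t.map fun p => Equiv.swap p.1 p.2).prod.SameCycle u v := by
      intro hcontra
      exact hAuv ((IH u v).1 hcontra)
    -- combine
    simp only [List.map_cons, List.prod_cons]
    rw [sameCycle_swapMul_iff hsc, reachable_sup_edge_iff huv, IH, IH, IH, IH, IH]

end Main

/-- If the edges of a tree on `n ≥ 2` vertices are listed in any order
(each edge exactly once, as a list of pairs of endpoints), then the product of the
corresponding transpositions is an `n`-cycle: a single cycle whose support is the whole
vertex set. -/
theorem stmt_5 {V : Type*} [Fintype V] [DecidableEq V] (G : SimpleGraph V)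
    (hG : G.IsTree) (hn : 2 ≤ Fintype.card V) (l : List (V × V))
    (hnodup : (l.map fun p => s(p.1, p.2)).Nodup)
    (hall : ∀ e : Sym2 V, e ∈ l.map (fun p => s(p.1, p.2)) ↔ e ∈ G.edgeSet) :
    (l.map fun p => Equiv.swap p.1 p.2).prod.IsCycle ∧
    (l.map fun p => Equiv.swap p.1 p.2).prod.support = Finset.univ := by
  have hsetG : {e : Sym2 V | e ∈ l.map fun p => s(p.1, p.2)} = G.edgeSet := by
    ext e; exact hall e
  have hgraph : SimpleGraph.fromEdgeSet {e : Sym2 V | e ∈ l.map fun p => s(p.1, p.2)} = G := by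
    rw [hsetG, SimpleGraph.fromEdgeSet_edgeSet]
  have hloop : ∀ p ∈ l, p.1 ≠ p.2 := by
    intro p hp
    have : s(p.1, p.2) ∈ G.edgeSet := (hall _).1 (List.mem_map_of_mem hp)
    have := G.not_isDiag_of_mem_edgeSet this
    simpa using this
  have hacy : (SimpleGraph.fromEdgeSet
      {e : Sym2 V | e ∈ l.map fun p => s(p.1, p.2)}).IsAcyclic := by
    rw [hgraph]; exact hG.IsAcyclic
  have key := key_lemma l hnodup hloop hacy
  rw [hgraph] at key
  set σ := (l.map fun p => Equiv.swap p.1 p.2).prod with hσ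
  have hreach : ∀ x y : V, σ.SameCycle x y := by
    intro x y
    exact (key x y).2 (hG.isConnected.preconnected x y)
  have hsupp : ∀ x : V, σ x ≠ x := by
    intro x hx
    obtain ⟨y, hy⟩ := Fintype.exists_ne_of_one_lt_card (by omega) x
    exact hy ((hreach x y).eq_of_left hx).symm
  have hnonempty : Nonempty V := Fintype.card_pos_iff.mp (by omega)
  obtain ⟨x⟩ := hnonempty
  constructor
  · exact ⟨x, hsupp x, fun y _ => hreach x y⟩
  · ext z
    simp [Equiv.Perm.mem_support, hsupp z]
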